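/- arXiv:1407.2728 — 2 statements merged into one kernel-verified Lean document; each statement's English description precedes it below -/
import Mathlib

section
/- Let ν be a probability measure on the product space ℝ^ℕ that is invariant under the one-sided shift S, where S(ω)(n) = ω(n+1) for all n ∈ ℕ, let p ∈ (0, 1), and suppose ∫ |ω(0)|^p dν(ω) < ∞. Then for ν-almost every ω ∈ ℝ^ℕ, lim_{n→∞} (1/n^{1/p}) · Σ_{k=0}^{n-1} ω(k) = 0. -/
open MeasureTheory Filter Set

private lemma shift_iter_apply (k n : ℕ) (ω : ℕ → ℝ) :
    ((fun (ω : ℕ → ℝ) (n : ℕ) => ω (n + 1))^[k] ω) n = ω (n + k) := by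
  induction k generalizing ω n with
  | zero => rfl
  | succ k ih =>
    rw [Function.iterate_succ_apply, ih]
    rfl

/-- Kronecker-type lemma for nonnegative sequences. -/
private lemma kron_aux {a : ℕ → ℝ} (ha : ∀ k, 0 ≤ a k) {r : ℝ} (hr : 0 < r)
    (hsum : Summable fun k => a k / ((k : ℝ) + 1) ^ r) :
    Tendsto (fun n : ℕ => (1 / (n : ℝ) ^ r) * ∑ k ∈ Finset.range n, a k) atTop (nhds 0) := by
  set f : ℕ → ℝ := fun k => a k / ((k : ℝ) + 1) ^ r with hf
  have hb : ∀ k : ℕ, (0:ℝ) < ((k : ℝ) + 1) ^ r := fun k =>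
    Real.rpow_pos_of_pos (by positivity) r
  have hterm : ∀ k, 0 ≤ f k := fun k => div_nonneg (ha k) (hb k).le
  rw [Metric.tendsto_atTop]
  intro ε hε
  have htail : Tendsto (fun N => ∑' k, f (k + N)) atTop (nhds 0) := tendsto_sum_nat_add f
  obtain ⟨N, hN⟩ := (htail.eventually (gt_mem_nhds (half_pos hε))).exists
  set C : ℝ := ∑ k ∈ Finset.range N, a k with hC
  have hnr : Tendsto (fun n : ℕ => (n:ℝ) ^ r) atTop atTop :=
    (tendsto_rpow_atTop hr).comp tendsto_natCast_atTop_atTop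
  have hCn : Tendsto (fun n : ℕ => C * ((n:ℝ) ^ r)⁻¹) atTop (nhds 0) := by
    simpa using (hnr.inv_tendsto_atTop.const_mul C)
  obtain ⟨M, hM⟩ := (Metric.tendsto_atTop.1 hCn (ε/2) (half_pos hε))
  refine ⟨max M N + 1, fun n hn => ?_⟩
  have hnN : N ≤ n := le_trans (le_trans (le_max_right M N) (Nat.le_succ _)) hn
  have hn1 : 1 ≤ n := le_trans (Nat.le_add_left 1 _) hn
  have hnpos : (0:ℝ) < (n:ℝ) ^ r := by
    have : (0:ℝ) < (n:ℝ) := by exact_mod_cast hn1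
    exact Real.rpow_pos_of_pos this r
  have hsum' : Summable fun k => f (k + N) := (summable_nat_add_iff N).2 hsum
  -- bound the middle sum
  have hmid : ∑ k ∈ Finset.Ico N n, a k ≤ (n:ℝ) ^ r * (ε/2) := by
    have h1 : ∀ k ∈ Finset.Ico N n, a k ≤ (n:ℝ) ^ r * f k := by
      intro k hk
      have hk' : (k:ℝ) + 1 ≤ (n:ℝ) := by
        have := (Finset.mem_Ico.1 hk).2
        exact_mod_cast this
      have h2 : ((k:ℝ) + 1) ^ r ≤ (n:ℝ) ^ r :=
        Real.rpow_le_rpow (by positivity) hk' hr.le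
      calc a k = f k * ((k:ℝ) + 1) ^ r := by
            rw [hf]; field_simp
        _ ≤ f k * (n:ℝ) ^ r := mul_le_mul_of_nonneg_left h2 (hterm k)
        _ = (n:ℝ) ^ r * f k := mul_comm _ _
    calc ∑ k ∈ Finset.Ico N n, a k ≤ ∑ k ∈ Finset.Ico N n, (n:ℝ) ^ r * f k :=
          Finset.sum_le_sum h1
      _ = (n:ℝ) ^ r * ∑ k ∈ Finset.Ico N n, f k := by rw [Finset.mul_sum]
      _ ≤ (n:ℝ) ^ r * (ε/2) := by
          refine mul_le_mul_of_nonneg_left ?_ hnpos.le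
          have heq : ∑ k ∈ Finset.Ico N n, f k = ∑ k ∈ Finset.range (n - N), f (N + k) :=
            Finset.sum_Ico_eq_sum_range _ _ _
          rw [heq]
          have hle : ∑ k ∈ Finset.range (n - N), f (N + k) ≤ ∑' k, f (k + N) := by
            have h := Summable.sum_le_tsum (Finset.range (n - N)) (fun k _ => hterm (k + N)) hsum'
            refine le_trans (le_of_eq ?_) h
            exact Finset.sum_congr rfl fun k _ => by rw [Nat.add_comm]
          exact le_trans hle hN.le
  have hsplit : ∑ k ∈ Finset.range n, a k = C + ∑ k ∈ Finset.Ico N n, a k := by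
    rw [hC, Finset.sum_range_add_sum_Ico _ hnN]
  have hnonneg : 0 ≤ (1 / (n:ℝ) ^ r) * ∑ k ∈ Finset.range n, a k := by
    apply mul_nonneg (by positivity)
    exact Finset.sum_nonneg fun k _ => ha k
  rw [Real.dist_eq, sub_zero, abs_of_nonneg hnonneg]
  have hCM : C * ((n:ℝ) ^ r)⁻¹ < ε/2 := by
    have h := hM n (le_trans (le_trans (le_max_left M N) (Nat.le_succ _)) hn)
    rw [Real.dist_eq, sub_zero] at h
    exact lt_of_le_of_lt (le_abs_self _) h
  calc (1 / (n:ℝ) ^ r) * ∑ k ∈ Finset.range n, a k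
      = C * ((n:ℝ) ^ r)⁻¹ + (1 / (n:ℝ) ^ r) * ∑ k ∈ Finset.Ico N n, a k := by
        rw [hsplit]; ring
    _ ≤ C * ((n:ℝ) ^ r)⁻¹ + (1 / (n:ℝ) ^ r) * ((n:ℝ) ^ r * (ε/2)) :=
        add_le_add_right (mul_le_mul_of_nonneg_left hmid (by positivity)) _
    _ = C * ((n:ℝ) ^ r)⁻¹ + ε/2 := by
        rw [one_div, inv_mul_cancel_left₀ hnpos.ne']
    _ < ε/2 + ε/2 := by linarith
    _ = ε := by ring

/-- Sum of values of a nonneg antitone function at positive integers is bounded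
by its integral over `(0, ∞)`. -/
private lemma sum_ofReal_le_lintegral {ψ : ℝ → ℝ} (hm : Measurable ψ)
    (hmono : ∀ u v : ℝ, 0 < u → u ≤ v → ψ v ≤ ψ u) :
    ∑' k : ℕ, ENNReal.ofReal (ψ ((k : ℝ) + 1))
      ≤ ∫⁻ u in Ioi (0:ℝ), ENNReal.ofReal (ψ u) := by
  have hdisj : Pairwise (Function.onFun Disjoint fun k : ℕ => Ioc (k:ℝ) ((k:ℝ)+1)) := by
    intro i j hij
    rw [Function.onFun, Set.disjoint_left]
    intro x hx1 hx2
    rw [mem_Ioc] at hx1 hx2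
    rcases lt_or_gt_of_ne hij with h | h
    · have h' : (i:ℝ) + 1 ≤ (j:ℝ) := by exact_mod_cast Nat.succ_le_of_lt h
      linarith [hx1.2, hx2.1]
    · have h' : (j:ℝ) + 1 ≤ (i:ℝ) := by exact_mod_cast Nat.succ_le_of_lt h
      linarith [hx2.2, hx1.1]
  have hsub : (⋃ k : ℕ, Ioc (k:ℝ) ((k:ℝ)+1)) ⊆ Ioi (0:ℝ) := by
    rintro x hx
    simp only [mem_iUnion, mem_Ioc] at hx
    obtain ⟨k, hk1, _⟩ := hx
    exact mem_Ioi.2 (lt_of_le_of_lt (Nat.cast_nonneg k) hk1)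
  have hstep : ∀ k : ℕ, ENNReal.ofReal (ψ ((k:ℝ)+1))
      ≤ ∫⁻ u in Ioc (k:ℝ) ((k:ℝ)+1), ENNReal.ofReal (ψ u) := by
    intro k
    have h1 : ENNReal.ofReal (ψ ((k:ℝ)+1))
        = ∫⁻ _ in Ioc (k:ℝ) ((k:ℝ)+1), ENNReal.ofReal (ψ ((k:ℝ)+1)) := by
      rw [setLIntegral_const, Real.volume_Ioc]
      simp
    rw [h1]
    refine setLIntegral_mono hm.ennreal_ofReal ?_
    intro u hu
    exact ENNReal.ofReal_le_ofReal
      (hmono u ((k:ℝ)+1) (lt_of_le_of_lt (Nat.cast_nonneg k) hu.1) hu.2)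
  calc ∑' k : ℕ, ENNReal.ofReal (ψ ((k:ℝ)+1))
      ≤ ∑' k : ℕ, ∫⁻ u in Ioc (k:ℝ) ((k:ℝ)+1), ENNReal.ofReal (ψ u) :=
        ENNReal.tsum_le_tsum hstep
    _ = ∫⁻ u in ⋃ k : ℕ, Ioc (k:ℝ) ((k:ℝ)+1), ENNReal.ofReal (ψ u) :=
        (lintegral_iUnion (fun k => measurableSet_Ioc) hdisj _).symm
    _ ≤ ∫⁻ u in Ioi (0:ℝ), ENNReal.ofReal (ψ u) := lintegral_mono_set hsub

private lemma integral_bound {p : ℝ} (hp0 : 0 < p) (hp1 : p < 1) {x : ℝ} (hx : 0 < x) :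
    ∫⁻ u in Ioi (0:ℝ), ENNReal.ofReal
        (min (x / u ^ (1/p)) ((x / u ^ (1/p)) ^ (p/2)))
      ≤ ENNReal.ofReal ((2 + p/(1-p)) * x ^ p) := by
  have hxp : (0:ℝ) < x ^ p := Real.rpow_pos_of_pos hx p
  have h1p : (0:ℝ) < 1 - p := by linarith
  rw [← Ioc_union_Ioi_eq_Ioi hxp.le,
    lintegral_union measurableSet_Ioi (Ioc_disjoint_Ioi le_rfl)]
  have hb1 : ∫⁻ u in Ioc (0:ℝ) (x^p),
      ENNReal.ofReal (min (x / u ^ (1/p)) ((x / u ^ (1/p)) ^ (p/2)))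
      ≤ ENNReal.ofReal (2 * x ^ p) := by
    have hpt : ∀ u ∈ Ioc (0:ℝ) (x^p),
        ENNReal.ofReal (min (x / u ^ (1/p)) ((x / u ^ (1/p)) ^ (p/2)))
          ≤ ENNReal.ofReal (x ^ (p/2) * u ^ (-(1:ℝ)/2)) := by
      intro u hu
      apply ENNReal.ofReal_le_ofReal
      have hu0 : 0 < u := hu.1
      have hup : 0 < u ^ (1/p) := Real.rpow_pos_of_pos hu0 _
      have heq : (x / u ^ (1/p)) ^ (p/2) = x ^ (p/2) * u ^ (-(1:ℝ)/2) := by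
        rw [Real.div_rpow hx.le hup.le, ← Real.rpow_mul hu0.le]
        have he : (1/p) * (p/2) = 1/2 := by field_simp
        rw [he, div_eq_mul_inv, ← Real.rpow_neg hu0.le]
        norm_num
      rw [← heq]
      exact min_le_right _ _
    have hmint : IntegrableOn (fun u : ℝ => x ^ (p/2) * u ^ (-(1:ℝ)/2)) (Ioc 0 (x^p)) := by
      have h := (intervalIntegral.intervalIntegrable_rpow' (by norm_num : (-1:ℝ) < -(1:ℝ)/2)
        (a := 0) (b := x^p)).1
      exact h.const_mul _
    have hnn : (0 : ℝ → ℝ) ≤ᵐ[volume.restrict (Ioc (0:ℝ) (x^p))]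
        fun u : ℝ => x ^ (p/2) * u ^ (-(1:ℝ)/2) := by
      filter_upwards [ae_restrict_mem measurableSet_Ioc] with u hu
      have hu0 : 0 < u := hu.1
      positivity
    have hval : ∫ u in Ioc (0:ℝ) (x^p), x ^ (p/2) * u ^ (-(1:ℝ)/2) = 2 * x ^ p := by
      rw [← intervalIntegral.integral_of_le hxp.le,
        intervalIntegral.integral_const_mul,
        integral_rpow (Or.inl (by norm_num : (-1:ℝ) < -(1:ℝ)/2))]
      have h0 : (0:ℝ) ^ (-(1:ℝ)/2 + 1) = 0 := Real.zero_rpow (by norm_num)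
      have h2 : (x ^ p) ^ (-(1:ℝ)/2 + 1) = x ^ (p/2) := by
        rw [← Real.rpow_mul hx.le]
        congr 1
        ring
      have h3 : x ^ (p/2) * x ^ (p/2) = x ^ p := by
        rw [← Real.rpow_add hx]
        congr 1
        ring
      rw [h0, h2]
      have h4 : x ^ (p/2) * ((x ^ (p/2) - 0) / (-(1:ℝ)/2 + 1))
          = 2 * (x ^ (p/2) * x ^ (p/2)) := by
        norm_num
        ring
      rw [h4, h3]
    calc ∫⁻ u in Ioc (0:ℝ) (x^p),
          ENNReal.ofReal (min (x / u ^ (1/p)) ((x / u ^ (1/p)) ^ (p/2)))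
        ≤ ∫⁻ u in Ioc (0:ℝ) (x^p), ENNReal.ofReal (x ^ (p/2) * u ^ (-(1:ℝ)/2)) :=
          setLIntegral_mono ((measurable_id.pow_const _).const_mul _).ennreal_ofReal hpt
      _ = ENNReal.ofReal (∫ u in Ioc (0:ℝ) (x^p), x ^ (p/2) * u ^ (-(1:ℝ)/2)) :=
          (ofReal_integral_eq_lintegral_ofReal hmint hnn).symm
      _ = ENNReal.ofReal (2 * x ^ p) := by rw [hval]
  have hb2 : ∫⁻ u in Ioi (x^p),
      ENNReal.ofReal (min (x / u ^ (1/p)) ((x / u ^ (1/p)) ^ (p/2)))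
      ≤ ENNReal.ofReal ((p/(1-p)) * x ^ p) := by
    have hexp : -(1/p) < (-1:ℝ) := by
      have h : (1:ℝ) < 1/p := by
        rw [lt_div_iff₀ hp0]; linarith
      linarith
    have hpt : ∀ u ∈ Ioi (x^p),
        ENNReal.ofReal (min (x / u ^ (1/p)) ((x / u ^ (1/p)) ^ (p/2)))
          ≤ ENNReal.ofReal (x * u ^ (-(1/p))) := by
      intro u hu
      apply ENNReal.ofReal_le_ofReal
      have hu0 : 0 < u := lt_trans hxp hu
      have heq : x / u ^ (1/p) = x * u ^ (-(1/p)) := by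
        rw [Real.rpow_neg hu0.le, div_eq_mul_inv]
      rw [← heq]
      exact min_le_left _ _
    have hmint : IntegrableOn (fun u : ℝ => x * u ^ (-(1/p))) (Ioi (x^p)) :=
      (integrableOn_Ioi_rpow_of_lt hexp hxp).const_mul _
    have hnn : (0 : ℝ → ℝ) ≤ᵐ[volume.restrict (Ioi (x^p))]
        fun u : ℝ => x * u ^ (-(1/p)) := by
      filter_upwards [ae_restrict_mem measurableSet_Ioi] with u hu
      have hu0 : 0 < u := lt_trans hxp hu
      positivity
    have hval : ∫ u in Ioi (x^p), x * u ^ (-(1/p)) = (p/(1-p)) * x ^ p := by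
      rw [MeasureTheory.integral_const_mul, integral_Ioi_rpow_of_lt hexp hxp]
      have h1 : (x ^ p) ^ (-(1/p) + 1) = x ^ (p - 1) := by
        rw [← Real.rpow_mul hx.le]
        congr 1
        field_simp
        ring
      have h2 : x * x ^ (p - 1) = x ^ p := by
        nth_rewrite 1 [← Real.rpow_one x]
        rw [← Real.rpow_add hx]
        congr 1
        ring
      rw [h1]
      have h3 : -(1:ℝ) / (-(1/p) + 1) = p / (1-p) := by
        have hd : -(1/p) + 1 = (p-1)/p := by field_simp; ring
        rw [hd, div_div_eq_mul_div,
          div_eq_div_iff (by linarith : p - 1 < 0).ne h1p.ne']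
        ring
      have h5 : x * (-x ^ (p-1) / (-(1/p) + 1))
          = (x * x ^ (p-1)) * (-(1:ℝ) / (-(1/p) + 1)) := by ring
      rw [h5, h2, h3]
      ring
    calc ∫⁻ u in Ioi (x^p),
          ENNReal.ofReal (min (x / u ^ (1/p)) ((x / u ^ (1/p)) ^ (p/2)))
        ≤ ∫⁻ u in Ioi (x^p), ENNReal.ofReal (x * u ^ (-(1/p))) :=
          setLIntegral_mono ((measurable_id.pow_const _).const_mul _).ennreal_ofReal hpt
      _ = ENNReal.ofReal (∫ u in Ioi (x^p), x * u ^ (-(1/p))) :=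
          (ofReal_integral_eq_lintegral_ofReal hmint hnn).symm
      _ = ENNReal.ofReal ((p/(1-p)) * x ^ p) := by rw [hval]
  calc _ ≤ ENNReal.ofReal (2 * x ^ p) + ENNReal.ofReal ((p/(1-p)) * x ^ p) :=
        add_le_add hb1 hb2
    _ = ENNReal.ofReal (2 * x ^ p + (p/(1-p)) * x ^ p) :=
        (ENNReal.ofReal_add (by positivity)
          (mul_nonneg (div_nonneg hp0.le h1p.le) hxp.le)).symm
    _ = ENNReal.ofReal ((2 + p/(1-p)) * x ^ p) := by rw [add_mul]

private lemma tsum_key {p : ℝ} (hp0 : 0 < p) (hp1 : p < 1) (x : ℝ) :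
    ∑' k : ℕ, ENNReal.ofReal
        (min (|x| / ((k:ℝ)+1) ^ (1/p)) ((|x| / ((k:ℝ)+1) ^ (1/p)) ^ (p/2)))
      ≤ ENNReal.ofReal ((2 + p/(1-p)) * |x| ^ p) := by
  rcases eq_or_lt_of_le (abs_nonneg x) with h0 | h0
  · have hz : ∀ k : ℕ,
        min (|x| / ((k:ℝ)+1) ^ (1/p)) ((|x| / ((k:ℝ)+1) ^ (1/p)) ^ (p/2)) = 0 := by
      intro k
      rw [← h0, zero_div, Real.zero_rpow (ne_of_gt (by linarith : (0:ℝ) < p/2)), min_self]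
    simp only [hz, ENNReal.ofReal_zero, tsum_zero]
    exact zero_le
  · refine le_trans (sum_ofReal_le_lintegral ?_ ?_) (integral_bound hp0 hp1 h0)
    · exact (measurable_const.div (measurable_id.pow_const _)).min
        ((measurable_const.div (measurable_id.pow_const _)).pow_const _)
    · intro u v hu huv
      have hup : 0 < u ^ (1/p) := Real.rpow_pos_of_pos hu _
      have h1 : |x| / v ^ (1/p) ≤ |x| / u ^ (1/p) :=
        div_le_div_of_nonneg_left (abs_nonneg x) hup
          (Real.rpow_le_rpow hu.le huv (by positivity))
      have h2 : (|x| / v ^ (1/p)) ^ (p/2) ≤ (|x| / u ^ (1/p)) ^ (p/2) :=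
        Real.rpow_le_rpow (div_nonneg (abs_nonneg x)
          (Real.rpow_nonneg (le_trans hu.le huv) _)) h1 (by positivity)
      exact min_le_min h1 h2

/-- MZ-type SLLN on path space: if `ν` is a shift-invariant probability measure on `ℕ → ℝ`
with `∫ |ω 0|^p dν < ∞` for some `p ∈ (0,1)`, then `n^{-1/p} ∑_{k<n} ω k → 0` ν-a.s. -/
theorem stmt_1 (ν : Measure (ℕ → ℝ)) [IsProbabilityMeasure ν]
    (hshift : MeasurePreserving (fun (ω : ℕ → ℝ) (n : ℕ) => ω (n + 1)) ν ν)
    (p : ℝ) (hp : p ∈ Set.Ioo (0 : ℝ) 1)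
    (hint : Integrable (fun ω : ℕ → ℝ => |ω 0| ^ p) ν) :
    ∀ᵐ ω ∂ν, Tendsto
      (fun n : ℕ => (1 / (n : ℝ) ^ (1 / p)) * ∑ k ∈ Finset.range n, ω k)
      atTop (nhds 0) := by
  obtain ⟨hp0, hp1⟩ := hp
  set g : ℕ → ℝ → ℝ := fun k y =>
    min (|y| / ((k:ℝ)+1) ^ (1/p)) ((|y| / ((k:ℝ)+1) ^ (1/p)) ^ (p/2)) with hgdef
  have hgm : ∀ k, Measurable (g k) := fun k =>
    (measurable_abs.div_const _).min ((measurable_abs.div_const _).pow_const _)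
  have hg0 : ∀ k y, 0 ≤ g k y := by
    intro k y
    refine le_min (div_nonneg (abs_nonneg _) (Real.rpow_nonneg (by positivity) _)) ?_
    exact Real.rpow_nonneg (div_nonneg (abs_nonneg _) (Real.rpow_nonneg (by positivity) _)) _
  have hFm : ∀ k, Measurable fun ω : ℕ → ℝ => ENNReal.ofReal (g k (ω k)) :=
    fun k => ((hgm k).comp (measurable_pi_apply k)).ennreal_ofReal
  have hF0m : ∀ k, Measurable fun ω : ℕ → ℝ => ENNReal.ofReal (g k (ω 0)) :=
    fun k => ((hgm k).comp (measurable_pi_apply 0)).ennreal_ofReal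
  -- shift invariance: coordinate k has the same distribution as coordinate 0
  have hA : ∀ k, ∫⁻ ω, ENNReal.ofReal (g k (ω k)) ∂ν
      = ∫⁻ ω, ENNReal.ofReal (g k (ω 0)) ∂ν := by
    intro k
    have hit := hshift.iterate k
    have hcomp := hit.lintegral_comp (hF0m k)
    calc ∫⁻ ω, ENNReal.ofReal (g k (ω k)) ∂ν
        = ∫⁻ ω, ENNReal.ofReal
            (g k (((fun (ω : ℕ → ℝ) (n : ℕ) => ω (n + 1))^[k] ω) 0)) ∂ν := by
          refine lintegral_congr fun ω => ?_
          rw [shift_iter_apply k 0 ω, Nat.zero_add]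
      _ = ∫⁻ ω, ENNReal.ofReal (g k (ω 0)) ∂ν := hcomp
  -- the constant
  set Cp : ℝ := 2 + p/(1-p) with hCp
  have hCp0 : 0 ≤ Cp := by
    have : 0 ≤ p / (1-p) := div_nonneg hp0.le (by linarith)
    rw [hCp]; linarith
  -- finiteness of the integral of the sum
  have key1 : ∫⁻ ω, ∑' k, ENNReal.ofReal (g k (ω k)) ∂ν < ⊤ := by
    rw [lintegral_tsum (fun k => (hFm k).aemeasurable)]
    have hfin : ∫⁻ ω, ENNReal.ofReal (|ω 0| ^ p) ∂ν < ⊤ := by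
      refine lt_of_le_of_lt (lintegral_mono fun ω => Real.ofReal_le_enorm _) ?_
      exact hint.2
    calc ∑' k, ∫⁻ ω, ENNReal.ofReal (g k (ω k)) ∂ν
        = ∑' k, ∫⁻ ω, ENNReal.ofReal (g k (ω 0)) ∂ν := tsum_congr hA
      _ = ∫⁻ ω, ∑' k, ENNReal.ofReal (g k (ω 0)) ∂ν :=
          (lintegral_tsum (fun k => (hF0m k).aemeasurable)).symm
      _ ≤ ∫⁻ ω, ENNReal.ofReal (Cp * |ω 0| ^ p) ∂ν :=
          lintegral_mono fun ω => tsum_key hp0 hp1 (ω 0)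
      _ = ∫⁻ ω, ENNReal.ofReal Cp * ENNReal.ofReal (|ω 0| ^ p) ∂ν := by
          refine lintegral_congr fun ω => ?_
          rw [ENNReal.ofReal_mul hCp0]
      _ = ENNReal.ofReal Cp * ∫⁻ ω, ENNReal.ofReal (|ω 0| ^ p) ∂ν :=
          lintegral_const_mul' _ _ ENNReal.ofReal_ne_top
      _ < ⊤ := ENNReal.mul_lt_top ENNReal.ofReal_lt_top hfin
  have hae := ae_lt_top (Measurable.ennreal_tsum hFm) key1.ne
  filter_upwards [hae] with ω hω
  -- fixed path: get summability
  set t : ℕ → ℝ := fun k => |ω k| / ((k:ℝ)+1) ^ (1/p) with htdef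
  have ht0 : ∀ k, 0 ≤ t k := fun k =>
    div_nonneg (abs_nonneg _) (Real.rpow_nonneg (by positivity) _)
  have hsum1 : Summable fun k => g k (ω k) := by
    have h := ENNReal.summable_toReal hω.ne
    refine h.congr fun k => ?_
    rw [ENNReal.toReal_ofReal (hg0 k (ω k))]
  have htend := hsum1.tendsto_atTop_zero
  have hev : ∀ᶠ k in atTop, g k (ω k) = t k := by
    filter_upwards [htend.eventually (gt_mem_nhds one_pos)] with k hk
    rcases eq_or_lt_of_le (ht0 k) with h0 | h0
    · -- t k = 0
      rw [hgdef]
      simp only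
      rw [show |ω k| / ((k:ℝ)+1) ^ (1/p) = t k from rfl, ← h0,
        Real.zero_rpow (ne_of_gt (by linarith : (0:ℝ) < p/2)), min_self]
    · by_cases h1 : t k ≤ 1
      · have hle : t k ≤ t k ^ (p/2) := by
          nth_rewrite 1 [← Real.rpow_one (t k)]
          exact Real.rpow_le_rpow_of_exponent_ge h0 h1 (by linarith)
        exact min_eq_left hle
      · exfalso
        push_neg at h1
        have hA1 : (1:ℝ) ≤ t k := h1.le
        have hA2 : (1:ℝ) ≤ t k ^ (p/2) := by
          calc (1:ℝ) = 1 ^ (p/2) := (Real.one_rpow _).symm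
            _ ≤ t k ^ (p/2) := Real.rpow_le_rpow zero_le_one hA1 (by linarith)
        have : (1:ℝ) ≤ g k (ω k) := le_min hA1 hA2
        exact absurd hk (not_lt.2 this)
  obtain ⟨N, hN⟩ := eventually_atTop.1 hev
  have hsum2 : Summable t := by
    have h1 : Summable fun k => g (k + N) (ω (k + N)) := (summable_nat_add_iff N).2 hsum1
    have h2 : Summable fun k => t (k + N) :=
      h1.congr fun k => hN (k + N) (Nat.le_add_left N k)
    exact (summable_nat_add_iff N).1 h2
  have hkron := kron_aux (fun k => abs_nonneg (ω k)) (by positivity : (0:ℝ) < 1/p) hsum2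
  refine squeeze_zero_norm (fun n => ?_) hkron
  rw [Real.norm_eq_abs, abs_mul, abs_of_nonneg (by positivity : (0:ℝ) ≤ 1 / (n:ℝ) ^ (1/p))]
  exact mul_le_mul_of_nonneg_left (Finset.abs_sum_le_sum_abs _ _) (by positivity)
end

section
/- Let p ∈ (0, 1) and let X be a nonnegative real-valued random variable with E[X^p] < ∞. Then (1/n^{1/p}) · Σ_{k=1}^{n} E[X · 1_{{X ≤ k^{1/p}}}] → 0 as n → ∞. -/
open MeasureTheory Filter

/-- Truncation estimate: for a nonnegative random variable `X` with `E[X^p] < ∞`,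
`p ∈ (0,1)`, one has `n^{-1/p} ∑_{k=1}^n E[X · 1_{X ≤ k^{1/p}}] → 0`. -/
theorem stmt_3 {Ω : Type*} [MeasurableSpace Ω] (P : Measure Ω) [IsProbabilityMeasure P]
    (p : ℝ) (hp : p ∈ Set.Ioo (0 : ℝ) 1)
    (X : Ω → ℝ) (hmeas : Measurable X) (hX : ∀ ω, 0 ≤ X ω)
    (hint : Integrable (fun ω => X ω ^ p) P) :
    Tendsto
      (fun n : ℕ => (1 / (n : ℝ) ^ (1 / p)) *
        ∑ k ∈ Finset.Icc 1 n, ∫ ω in {ω | X ω ≤ (k : ℝ) ^ (1 / p)}, X ω ∂P)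
      atTop (nhds 0) := by
  obtain ⟨hp0, hp1⟩ := hp
  have hXp_meas : Measurable fun ω => X ω ^ p :=
    (Real.continuous_rpow_const (le_of_lt hp0)).measurable.comp hmeas
  have hXp_nonneg : ∀ ω, 0 ≤ X ω ^ p := fun ω => Real.rpow_nonneg (hX ω) p
  -- the tail function
  set g : ℕ → ℝ := fun m => ∫ ω in {ω | (m : ℝ) < X ω}, X ω ^ p ∂P with hg
  have hsetlt : ∀ A : ℝ, MeasurableSet {ω | A < X ω} := fun A =>
    measurableSet_lt measurable_const hmeas
  have hsetle : ∀ M : ℝ, MeasurableSet {ω | X ω ≤ M} := fun M =>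
    measurableSet_le hmeas measurable_const
  have hg_nonneg : ∀ m, 0 ≤ g m := fun m =>
    setIntegral_nonneg (hsetlt _) fun ω _ => hXp_nonneg ω
  -- tail tends to 0
  have hg_tendsto : Tendsto g atTop (nhds 0) := by
    have h0 : (0 : ℝ) = ∫ ω, (0 : ℝ) ∂P := by simp
    rw [hg]
    have : ∀ m : ℕ, (∫ ω in {ω | (m : ℝ) < X ω}, X ω ^ p ∂P)
        = ∫ ω, Set.indicator {ω | (m : ℝ) < X ω} (fun ω => X ω ^ p) ω ∂P := fun m =>
      (integral_indicator (hsetlt _)).symm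
    simp only [this]
    rw [h0]
    apply tendsto_integral_of_dominated_convergence (fun ω => X ω ^ p)
    · intro m
      exact (hXp_meas.indicator (hsetlt _)).aestronglyMeasurable
    · exact hint
    · intro m
      filter_upwards with ω
      rw [Real.norm_eq_abs, abs_of_nonneg (Set.indicator_nonneg (fun ω _ => hXp_nonneg ω) ω)]
      by_cases hmem : ω ∈ {ω' | (m : ℝ) < X ω'}
      · rw [Set.indicator_of_mem hmem]
      · rw [Set.indicator_of_notMem hmem]; exact hXp_nonneg ω
    · filter_upwards with ω
      obtain ⟨m₀, hm₀⟩ := exists_nat_ge (X ω)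
      apply tendsto_const_nhds.congr' (α := ℕ)
      filter_upwards [eventually_ge_atTop m₀] with m hm
      have : ω ∉ {ω' | (m : ℝ) < X ω'} := by
        simp only [Set.mem_setOf_eq, not_lt]
        exact hm₀.trans (by exact_mod_cast hm)
      simp [Set.indicator_of_notMem this]
  -- truncated integrals are nonneg
  have hf_nonneg : ∀ k : ℕ, 0 ≤ ∫ ω in {ω | X ω ≤ (k : ℝ) ^ (1 / p)}, X ω ∂P := fun k =>
    setIntegral_nonneg (hsetle _) fun ω _ => hX ω
  -- key truncation bound:
  -- ∫_{X ≤ M} X ≤ A + M^(1-p) * g A  for A : ℕ, M ≥ 0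
  have key : ∀ (A : ℕ) (M : ℝ), 0 ≤ M →
      (∫ ω in {ω | X ω ≤ M}, X ω ∂P) ≤ (A : ℝ) + M ^ (1 - p) * g A := by
    intro A M hM
    have hM1p : (0 : ℝ) ≤ M ^ (1 - p) := Real.rpow_nonneg hM _
    have hptw : ∀ ω, Set.indicator {ω | X ω ≤ M} X ω
        ≤ (A : ℝ) + M ^ (1 - p) * Set.indicator {ω | (A : ℝ) < X ω} (fun ω => X ω ^ p) ω := by
      intro ω
      have hind_nonneg : 0 ≤ Set.indicator {ω | (A : ℝ) < X ω} (fun ω => X ω ^ p) ω :=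
        Set.indicator_nonneg (fun ω _ => hXp_nonneg ω) ω
      by_cases hmem : ω ∈ {ω | X ω ≤ M}
      · rw [Set.indicator_of_mem hmem]
        by_cases hA : X ω ≤ (A : ℝ)
        · calc X ω ≤ (A : ℝ) := hA
            _ ≤ _ := le_add_of_nonneg_right (mul_nonneg hM1p hind_nonneg)
        · push_neg at hA
          rw [Set.indicator_of_mem (by exact hA : ω ∈ {ω | (A : ℝ) < X ω})]
          have hx : X ω = X ω ^ (1 - p) * X ω ^ p := by
            rw [← Real.rpow_add_of_nonneg (hX ω) (by linarith) (le_of_lt hp0)]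
            simp
          have : X ω ^ (1 - p) * X ω ^ p ≤ M ^ (1 - p) * X ω ^ p :=
            mul_le_mul_of_nonneg_right
              (Real.rpow_le_rpow (hX ω) hmem (by linarith)) (hXp_nonneg ω)
          calc X ω = X ω ^ (1 - p) * X ω ^ p := hx
            _ ≤ M ^ (1 - p) * X ω ^ p := this
            _ ≤ (A : ℝ) + M ^ (1 - p) * X ω ^ p := le_add_of_nonneg_left (Nat.cast_nonneg A)
      · rw [Set.indicator_of_notMem hmem]
        positivity
    -- integrability of both sides
    have hint_lhs : Integrable (Set.indicator {ω | X ω ≤ M} X) P := by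
      apply Integrable.mono' (integrable_const M)
        ((hmeas.indicator (hsetle M)).aestronglyMeasurable)
      filter_upwards with ω
      rw [Real.norm_eq_abs, abs_of_nonneg (Set.indicator_nonneg (fun ω _ => hX ω) ω)]
      by_cases hmem : ω ∈ {ω | X ω ≤ M}
      · rw [Set.indicator_of_mem hmem]; exact hmem
      · rw [Set.indicator_of_notMem hmem]; exact hM
    have hint_ind : Integrable
        (Set.indicator {ω | (A : ℝ) < X ω} (fun ω => X ω ^ p)) P :=
      hint.indicator (hsetlt _)
    have hint_rhs : Integrable (fun ω =>
        (A : ℝ) + M ^ (1 - p) * Set.indicator {ω | (A : ℝ) < X ω} (fun ω => X ω ^ p) ω) P :=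
      (integrable_const _).add (hint_ind.const_mul _)
    calc (∫ ω in {ω | X ω ≤ M}, X ω ∂P)
        = ∫ ω, Set.indicator {ω | X ω ≤ M} X ω ∂P := (integral_indicator (hsetle M)).symm
      _ ≤ ∫ ω, ((A : ℝ) + M ^ (1 - p) *
            Set.indicator {ω | (A : ℝ) < X ω} (fun ω => X ω ^ p) ω) ∂P :=
          integral_mono hint_lhs hint_rhs hptw
      _ = (A : ℝ) + M ^ (1 - p) * g A := by
          rw [integral_add (integrable_const _) (hint_ind.const_mul _),
            integral_const, integral_const_mul, integral_indicator (hsetlt _)]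
          simp [hg]
    -- done with key
  -- now the main ε-argument
  rw [NormedAddCommGroup.tendsto_nhds_zero]
  intro ε hε
  obtain ⟨A, hA⟩ := (Metric.tendsto_atTop.mp hg_tendsto (ε / 2) (by linarith))
  have hgA : g A < ε / 2 := by
    have := hA A le_rfl
    rwa [Real.dist_eq, sub_zero, abs_of_nonneg (hg_nonneg A)] at this
  -- the error term A * n^(1-1/p) tends to 0
  have h1p : (0 : ℝ) < 1 / p - 1 := by
    have : (1 : ℝ) < 1 / p := by
      rw [lt_div_iff₀ hp0]; linarith
    linarith
  have hpow : Tendsto (fun n : ℕ => (A : ℝ) * (n : ℝ) ^ (1 - 1 / p)) atTop (nhds 0) := by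
    have h2 : Tendsto (fun n : ℕ => (n : ℝ) ^ (-(1 / p - 1))) atTop (nhds 0) :=
      (tendsto_rpow_neg_atTop h1p).comp tendsto_natCast_atTop_atTop
    have h3 : Tendsto (fun n : ℕ => (n : ℝ) ^ (1 - 1 / p)) atTop (nhds 0) := by
      simpa [neg_sub] using h2
    simpa using h3.const_mul (A : ℝ)
  filter_upwards [hpow.eventually_lt_const (show (0 : ℝ) < ε - g A by linarith),
    eventually_ge_atTop 1] with n hn hn1
  have hn0 : (0 : ℝ) < (n : ℝ) := by exact_mod_cast Nat.lt_of_lt_of_le Nat.zero_lt_one hn1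
  have hnp : (0 : ℝ) < (n : ℝ) ^ (1 / p) := Real.rpow_pos_of_pos hn0 _
  have hexp : (0 : ℝ) ≤ 1 / p * (1 - p) := by
    apply mul_nonneg (by positivity); linarith
  -- termwise bound and sum bound
  have hsum : (∑ k ∈ Finset.Icc 1 n, ∫ ω in {ω | X ω ≤ (k : ℝ) ^ (1 / p)}, X ω ∂P)
      ≤ n * ((A : ℝ) + (n : ℝ) ^ (1 / p * (1 - p)) * g A) := by
    calc (∑ k ∈ Finset.Icc 1 n, ∫ ω in {ω | X ω ≤ (k : ℝ) ^ (1 / p)}, X ω ∂P)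
        ≤ ∑ _k ∈ Finset.Icc 1 n, ((A : ℝ) + (n : ℝ) ^ (1 / p * (1 - p)) * g A) := by
          apply Finset.sum_le_sum
          intro k hk
          have hkn : (k : ℝ) ≤ (n : ℝ) := by
            exact_mod_cast (Finset.mem_Icc.mp hk).2
          have hkey := key A ((k : ℝ) ^ (1 / p)) (Real.rpow_nonneg (Nat.cast_nonneg k) _)
          have heq : ((k : ℝ) ^ (1 / p)) ^ (1 - p) = (k : ℝ) ^ (1 / p * (1 - p)) :=
            (Real.rpow_mul (Nat.cast_nonneg k) _ _).symm
          have hmono : (k : ℝ) ^ (1 / p * (1 - p)) ≤ (n : ℝ) ^ (1 / p * (1 - p)) :=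
            Real.rpow_le_rpow (Nat.cast_nonneg k) hkn hexp
          calc (∫ ω in {ω | X ω ≤ (k : ℝ) ^ (1 / p)}, X ω ∂P)
              ≤ (A : ℝ) + ((k : ℝ) ^ (1 / p)) ^ (1 - p) * g A := hkey
            _ = (A : ℝ) + (k : ℝ) ^ (1 / p * (1 - p)) * g A := by rw [heq]
            _ ≤ (A : ℝ) + (n : ℝ) ^ (1 / p * (1 - p)) * g A := by
                have := mul_le_mul_of_nonneg_right hmono (hg_nonneg A)
                linarith
      _ = n * ((A : ℝ) + (n : ℝ) ^ (1 / p * (1 - p)) * g A) := by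
          rw [Finset.sum_const, Nat.card_Icc]
          simp only [nsmul_eq_mul, Nat.add_sub_cancel]
  -- algebraic identity
  have e1 : (n : ℝ) / (n : ℝ) ^ (1 / p) = (n : ℝ) ^ (1 - 1 / p) := by
    rw [Real.rpow_sub hn0, Real.rpow_one]
  have e2 : (n : ℝ) * (n : ℝ) ^ (1 / p * (1 - p)) = (n : ℝ) ^ (1 / p) := by
    nth_rewrite 1 [← Real.rpow_one (n : ℝ)]
    rw [← Real.rpow_add hn0]
    congr 1
    field_simp
    ring
  have hid : (1 / (n : ℝ) ^ (1 / p)) * ((n : ℝ) * ((A : ℝ) + (n : ℝ) ^ (1 / p * (1 - p)) * g A))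
      = (A : ℝ) * (n : ℝ) ^ (1 - 1 / p) + g A := by
    have : (1 / (n : ℝ) ^ (1 / p)) * ((n : ℝ) * ((A : ℝ) + (n : ℝ) ^ (1 / p * (1 - p)) * g A))
        = ((n : ℝ) / (n : ℝ) ^ (1 / p)) * (A : ℝ)
          + (((n : ℝ) * (n : ℝ) ^ (1 / p * (1 - p))) / (n : ℝ) ^ (1 / p)) * g A := by
      ring
    rw [this, e1, e2, div_self (ne_of_gt hnp), one_mul, mul_comm]
  -- conclude
  have hsn_nonneg : 0 ≤ (1 / (n : ℝ) ^ (1 / p)) *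
      ∑ k ∈ Finset.Icc 1 n, ∫ ω in {ω | X ω ≤ (k : ℝ) ^ (1 / p)}, X ω ∂P :=
    mul_nonneg (by positivity) (Finset.sum_nonneg fun k _ => hf_nonneg k)
  rw [Real.norm_eq_abs, abs_of_nonneg hsn_nonneg]
  calc (1 / (n : ℝ) ^ (1 / p)) *
      ∑ k ∈ Finset.Icc 1 n, ∫ ω in {ω | X ω ≤ (k : ℝ) ^ (1 / p)}, X ω ∂P
      ≤ (1 / (n : ℝ) ^ (1 / p)) * ((n : ℝ) * ((A : ℝ) + (n : ℝ) ^ (1 / p * (1 - p)) * g A)) :=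
        mul_le_mul_of_nonneg_left hsum (by positivity)
    _ = (A : ℝ) * (n : ℝ) ^ (1 - 1 / p) + g A := hid
    _ < (ε - g A) + g A := by linarith
    _ = ε := by ring
end
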